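/- Let X be standard Gaussian and let g solve g'(x) − x g(x) = h(x) − E[h(X)] with g(x) = e^{x²/2} ∫_{-∞}^x (h(u) − E[h(X)]) e^{-u²/2} du. If h is absolutely continuous with |h'| ≤ κ₂, then |g(x)| ≤ κ₂ for all x. -/

import Mathlib

open Real MeasureTheory Set

/-- Standard Gaussian pdf. -/
noncomputable def gaussPdf (x : ℝ) : ℝ := (Real.sqrt (2 * π))⁻¹ * Real.exp (-x ^ 2 / 2)

open Filter Topology

lemma aux_exp_eq : ∀ u : ℝ, -u ^ 2 / 2 = -(1/2) * u ^ 2 := fun u => by ring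

lemma aux_int_E : Integrable (fun u : ℝ => Real.exp (-u ^ 2 / 2)) := by
  simpa [aux_exp_eq] using integrable_exp_neg_mul_sq (by norm_num : (0:ℝ) < 1/2)

lemma aux_int_mulE : Integrable (fun u : ℝ => u * Real.exp (-u ^ 2 / 2)) := by
  simpa [aux_exp_eq] using integrable_mul_exp_neg_mul_sq (by norm_num : (0:ℝ) < 1/2)

lemma aux_int_absE : Integrable (fun u : ℝ => |u| * Real.exp (-u ^ 2 / 2)) := by
  refine aux_int_mulE.abs.congr (Filter.Eventually.of_forall fun u => ?_)
  simp [abs_mul, abs_of_pos (Real.exp_pos _)]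

lemma aux_integral_E : ∫ u : ℝ, Real.exp (-u ^ 2 / 2) = Real.sqrt (2 * π) := by
  have h := integral_gaussian (1/2)
  rw [show π / (1/2 : ℝ) = 2 * π by ring] at h
  simpa [aux_exp_eq] using h

lemma aux_integral_odd : ∫ u : ℝ, u * Real.exp (-u ^ 2 / 2) = 0 := by
  have h := integral_neg_eq_self (fun u : ℝ => u * Real.exp (-u ^ 2 / 2)) volume
  simp only [neg_sq, neg_mul] at h
  rw [integral_neg] at h
  linarith

lemma aux_integral_Iic (x : ℝ) :
    ∫ u in Iic x, u * Real.exp (-u ^ 2 / 2) = -Real.exp (-x ^ 2 / 2) := by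
  have hderiv : ∀ u ∈ Iic x, HasDerivAt (fun u : ℝ => -Real.exp (-u ^ 2 / 2))
      (u * Real.exp (-u ^ 2 / 2)) u := by
    intro u _
    have h0 : HasDerivAt (fun u : ℝ => -u ^ 2 / 2) (-u) u := by
      have h1 : HasDerivAt (fun u : ℝ => u ^ 2) (2 * u) u := by simpa using hasDerivAt_pow 2 u
      have := (h1.div_const 2).neg
      refine (this.congr_deriv (by ring)).congr_of_eventuallyEq (Filter.Eventually.of_forall fun v => ?_)
      show -v ^ 2 / 2 = -(v ^ 2 / 2); ring
    have := (h0.exp).neg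
    refine (this.congr_deriv (by ring)).congr_of_eventuallyEq (Filter.Eventually.of_forall fun v => ?_)
    rfl
  have htend : Tendsto (fun u : ℝ => -Real.exp (-u ^ 2 / 2)) atBot (𝓝 0) := by
    have h1 : Tendsto (fun u : ℝ => u ^ 2) atBot atTop := by
      have := (tendsto_pow_atTop (two_ne_zero)).comp (tendsto_neg_atBot_atTop (G := ℝ))
      simpa [Function.comp_def, neg_sq] using this
    have h2 : Tendsto (fun u : ℝ => -u ^ 2 / 2) atBot atBot :=
      Tendsto.atBot_div_const (by norm_num) (tendsto_neg_atTop_atBot.comp h1)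
    have := (Real.tendsto_exp_atBot.comp h2).neg
    simpa using this
  have := integral_Iic_of_hasDerivAt_of_tendsto' hderiv aux_int_mulE.integrableOn htend
  rw [this]; ring

lemma aux_mono_nonpos (k : ℝ → ℝ) (c : ℝ) (hmono : Monotone k)
    (hint : Integrable (fun u => (k u - c) * Real.exp (-u ^ 2 / 2)))
    (htot : ∫ u : ℝ, (k u - c) * Real.exp (-u ^ 2 / 2) = 0) (x : ℝ) :
    ∫ u in Iic x, (k u - c) * Real.exp (-u ^ 2 / 2) ≤ 0 := by
  by_cases hx : k x ≤ c
  · refine setIntegral_nonpos measurableSet_Iic fun u hu => ?_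
    have : k u ≤ k x := hmono hu
    exact mul_nonpos_of_nonpos_of_nonneg (by linarith) (Real.exp_pos _).le
  · push_neg at hx
    have hsplit := intervalIntegral.integral_Iic_add_Ioi (b := x) hint.integrableOn hint.integrableOn
    have hpos : 0 ≤ ∫ u in Ioi x, (k u - c) * Real.exp (-u ^ 2 / 2) := by
      refine setIntegral_nonneg measurableSet_Ioi fun u hu => ?_
      have : k x ≤ k u := hmono (le_of_lt hu)
      exact mul_nonneg (by linarith) (Real.exp_pos _).le
    rw [htot] at hsplit
    linarith

lemma aux_lower (h : ℝ → ℝ) (κ₂ : ℝ)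
    (hLip : ∀ y z : ℝ, |h y - h z| ≤ κ₂ * |y - z|) (x : ℝ) :
    -(κ₂ * Real.exp (-x ^ 2 / 2)) ≤
      ∫ u in Iic x, (h u - ∫ v, h v * gaussPdf v) * Real.exp (-u ^ 2 / 2) := by
  have hκ : 0 ≤ κ₂ := le_trans (abs_nonneg _) (by simpa using hLip 1 0)
  have hcont : Continuous h := by
    have hl : LipschitzWith (Real.toNNReal κ₂) h := by
      apply LipschitzWith.of_dist_le_mul
      intro y z
      rw [Real.dist_eq, Real.dist_eq, Real.coe_toNNReal κ₂ hκ]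
      exact hLip y z
    exact hl.continuous
  set s := Real.sqrt (2 * π) with hs
  have hs_pos : 0 < s := Real.sqrt_pos.mpr (by positivity)
  have hbound : ∀ u : ℝ, |h u| ≤ |h 0| + κ₂ * |u| := by
    intro u
    have h1 := hLip u 0
    simp only [sub_zero] at h1
    calc |h u| = |(h u - h 0) + h 0| := by ring_nf
    _ ≤ |h u - h 0| + |h 0| := abs_add_le _ _
    _ ≤ |h 0| + κ₂ * |u| := by linarith
  have hintH : Integrable (fun u : ℝ => h u * Real.exp (-u ^ 2 / 2)) := by
    refine Integrable.mono' ((aux_int_E.const_mul |h 0|).add (aux_int_absE.const_mul κ₂))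
      ((hcont.mul (by continuity)).aestronglyMeasurable)
      (Filter.Eventually.of_forall fun u => ?_)
    rw [norm_mul, Real.norm_eq_abs, Real.norm_eq_abs, abs_of_pos (Real.exp_pos _)]
    have h1 := hbound u
    have h2 := (Real.exp_pos (-u ^ 2 / 2)).le
    simp only [Pi.add_apply]
    nlinarith [abs_nonneg u, abs_nonneg (h 0)]
  have hgauss_eq : ∀ f : ℝ → ℝ,
      (fun u => f u * gaussPdf u) = fun u => s⁻¹ * (f u * Real.exp (-u ^ 2 / 2)) := by
    intro f; funext u; simp only [gaussPdf, ← hs]; ring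
  set μh := ∫ v, h v * gaussPdf v with hμ
  have hHE : ∫ u : ℝ, h u * Real.exp (-u ^ 2 / 2) = s * μh := by
    rw [hμ, hgauss_eq h, integral_const_mul]
    field_simp
  set k : ℝ → ℝ := fun u => κ₂ * u - h u with hk
  set c : ℝ := -μh with hc
  have hmono : Monotone k := by
    intro y z hyz
    have h1 := hLip z y
    rw [abs_of_nonneg (sub_nonneg.mpr hyz)] at h1
    have h2 := le_abs_self (h z - h y)
    simp only [hk]
    linarith
  have hfun_eq : (fun u => (k u - c) * Real.exp (-u ^ 2 / 2)) =
      fun u => κ₂ * (u * Real.exp (-u ^ 2 / 2)) - h u * Real.exp (-u ^ 2 / 2)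
        + μh * Real.exp (-u ^ 2 / 2) := by
    funext u; simp only [hk, hc]; ring
  have intA : Integrable (fun u : ℝ => κ₂ * (u * Real.exp (-u ^ 2 / 2))) :=
    aux_int_mulE.const_mul κ₂
  have intB : Integrable (fun u : ℝ => h u * Real.exp (-u ^ 2 / 2)) := hintH
  have intC : Integrable (fun u : ℝ => μh * Real.exp (-u ^ 2 / 2)) := aux_int_E.const_mul μh
  have intAB : Integrable
      (fun u : ℝ => κ₂ * (u * Real.exp (-u ^ 2 / 2)) - h u * Real.exp (-u ^ 2 / 2)) :=
    intA.sub intB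
  have hint_k : Integrable (fun u => (k u - c) * Real.exp (-u ^ 2 / 2)) := by
    rw [hfun_eq]
    exact intAB.add intC
  have htot : ∫ u : ℝ, (k u - c) * Real.exp (-u ^ 2 / 2) = 0 := by
    rw [hfun_eq, integral_add intAB intC, integral_sub intA intB,
      integral_const_mul, integral_const_mul, aux_integral_odd, hHE, aux_integral_E]
    ring
  have hkey := aux_mono_nonpos k c hmono hint_k htot x
  have hint_hmu : Integrable (fun u => (h u - μh) * Real.exp (-u ^ 2 / 2)) := by
    have : (fun u => (h u - μh) * Real.exp (-u ^ 2 / 2)) =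
        fun u => h u * Real.exp (-u ^ 2 / 2) - μh * Real.exp (-u ^ 2 / 2) := by
      funext u; ring
    rw [this]; exact hintH.sub (aux_int_E.const_mul μh)
  have hsplit : ∫ u in Iic x, (k u - c) * Real.exp (-u ^ 2 / 2) =
      κ₂ * (∫ u in Iic x, u * Real.exp (-u ^ 2 / 2))
        - ∫ u in Iic x, (h u - μh) * Real.exp (-u ^ 2 / 2) := by
    rw [← integral_const_mul, ← integral_sub (intA.integrableOn) hint_hmu.integrableOn]
    congr 1
    funext u
    simp only [hk, hc]; ring
  rw [hsplit, aux_integral_Iic] at hkey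
  linarith

/-- Bound on the solution of the Gaussian Stein equation for Lipschitz `h`:
if `|h'| ≤ κ₂` (i.e. `h` is `κ₂`-Lipschitz) then `|g(x)| ≤ κ₂` for all `x`. -/
theorem stmt3 (h : ℝ → ℝ) (κ₂ : ℝ)
    (hLip : ∀ y z : ℝ, |h y - h z| ≤ κ₂ * |y - z|)
    (g : ℝ → ℝ)
    (hg : ∀ x, g x = Real.exp (x ^ 2 / 2) *
      ∫ u in Set.Iic x, (h u - ∫ v, h v * gaussPdf v) * Real.exp (-u ^ 2 / 2)) :
    ∀ x : ℝ, |g x| ≤ κ₂ := by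
  intro x
  set μh := ∫ v, h v * gaussPdf v with hμ
  set I := ∫ u in Set.Iic x, (h u - μh) * Real.exp (-u ^ 2 / 2) with hI
  have hlow : -(κ₂ * Real.exp (-x ^ 2 / 2)) ≤ I := aux_lower h κ₂ hLip x
  have hLip' : ∀ y z : ℝ, |(-h) y - (-h) z| ≤ κ₂ * |y - z| := by
    intro y z
    have h1 := hLip z y
    rw [abs_sub_comm z y] at h1
    calc |(-h) y - (-h) z| = |h z - h y| := by congr 1; simp; ring
      _ ≤ κ₂ * |y - z| := h1
  have hneg_mean : ∫ v, (-h) v * gaussPdf v = -μh := by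
    rw [hμ]
    have : (fun v => (-h) v * gaussPdf v) = fun v => -(h v * gaussPdf v) := by
      funext v; simp
    rw [this, integral_neg]
  have hupp : I ≤ κ₂ * Real.exp (-x ^ 2 / 2) := by
    have := aux_lower (-h) κ₂ hLip' x
    rw [hneg_mean] at this
    have heq : ∫ u in Set.Iic x, ((-h) u - -μh) * Real.exp (-u ^ 2 / 2) = -I := by
      have hfe : (fun u => ((-h) u - -μh) * Real.exp (-u ^ 2 / 2)) =
          fun u => -((h u - μh) * Real.exp (-u ^ 2 / 2)) := by
        funext u; simp; ring
      rw [hfe, integral_neg, hI]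
    rw [heq] at this
    linarith
  have hIbound : |I| ≤ κ₂ * Real.exp (-x ^ 2 / 2) := abs_le.mpr ⟨hlow, hupp⟩
  rw [hg x, abs_mul, abs_of_pos (Real.exp_pos _)]
  have hprod : Real.exp (x ^ 2 / 2) * Real.exp (-x ^ 2 / 2) = 1 := by
    rw [← Real.exp_add, show x ^ 2 / 2 + -x ^ 2 / 2 = 0 by ring, Real.exp_zero]
  calc Real.exp (x ^ 2 / 2) * |I| ≤ Real.exp (x ^ 2 / 2) * (κ₂ * Real.exp (-x ^ 2 / 2)) :=
        mul_le_mul_of_nonneg_left hIbound (Real.exp_pos _).le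
    _ = κ₂ * (Real.exp (x ^ 2 / 2) * Real.exp (-x ^ 2 / 2)) := by ring
    _ = κ₂ := by rw [hprod, mul_one]
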